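/- Let A be a positive integer and let q ∈ Q_A with q ≥ 2. Then there exists a finite connected simple graph G such that i(G) = q and 2·|E(G)| ≤ (A+1)·|V(G)|, i.e., the average degree of G is at most A+1. -/

import Mathlib

/-- The number of independent sets of a simple graph `G`
(including the empty set). -/
noncomputable def numIndep {V : Type*} (G : SimpleGraph V) : ℕ :=
  Nat.card {s : Set V // ∀ x ∈ s, ∀ y ∈ s, ¬ G.Adj x y}

/-- The continued fraction `[a₁,…,a_ℓ] = 1/(a₁+1/(a₂+⋯+1/a_ℓ))`. -/
def contFrac : List ℕ → ℚ
  | [] => 0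
  | a :: rest => 1 / ((a : ℚ) + contFrac rest)

/-- `QSet A` is the set of positive integers `q` such that `q = 1` or there is
`1 ≤ p < q` coprime to `q` with `p/q = [a₁,…,a_ℓ]` for some `a₁,…,a_ℓ ≤ A`. -/
def QSet (A : ℕ) : Set ℕ :=
  {q | q = 1 ∨ ∃ p : ℕ, 1 ≤ p ∧ p < q ∧ Nat.gcd p q = 1 ∧
    ∃ L : List ℕ, L ≠ [] ∧ (∀ a ∈ L, 1 ≤ a ∧ a ≤ A) ∧ contFrac L = (p : ℚ) / q}

namespace IndepAux

def cont : List ℕ → ℕ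
  | [] => 1
  | [a] => a
  | a :: b :: M => a * cont (b :: M) + cont M


lemma cont_pos : ∀ L : List ℕ, (∀ x ∈ L, 1 ≤ x) → 0 < cont L
  | [], _ => one_pos
  | [a], h => h a (by simp)
  | a :: b :: M, h => by
    have h1 := cont_pos (b :: M) (fun x hx => h x (by simp at hx ⊢; tauto))
    have h2 := h a (by simp)
    simp only [cont]
    positivity

lemma cont_coprime : ∀ L : List ℕ, Nat.Coprime (cont L.tail) (cont L)
  | [] => by simp [cont]
  | [a] => by simp [cont, Nat.Coprime]
  | a :: b :: M => by
    have ih := cont_coprime (b :: M)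
    show Nat.Coprime (cont (b :: M)) (a * cont (b :: M) + cont M)
    have h2 : Nat.Coprime (cont (b :: M)) (cont M) := by
      simpa using ih.symm
    rw [add_comm]
    exact (Nat.coprime_add_mul_right_right _ _ a).mpr h2

lemma contFrac_nonneg : ∀ L : List ℕ, (∀ x ∈ L, 1 ≤ x) → 0 ≤ contFrac L
  | [], _ => le_refl 0
  | a :: M, h => by
    have h1 := contFrac_nonneg M (fun x hx => h x (by simp [hx]))
    have h2 : (1 : ℚ) ≤ (a : ℚ) := by exact_mod_cast h a (by simp)
    simp only [contFrac]
    positivity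

lemma contFrac_eq : ∀ L : List ℕ, L ≠ [] → (∀ x ∈ L, 1 ≤ x) →
    contFrac L = (cont L.tail : ℚ) / (cont L : ℚ)
  | [], h, _ => absurd rfl h
  | [a], _, h => by
    simp only [contFrac, cont, List.tail]
    norm_num
  | a :: b :: M, _, h => by
    have hbM : ∀ x ∈ b :: M, 1 ≤ x := fun x hx => h x (by simp at hx ⊢; tauto)
    have hM : ∀ x ∈ M, 1 ≤ x := fun x hx => hbM x (by simp [hx])
    have ih := contFrac_eq (b :: M) (by simp) hbM
    have hc1 : 0 < cont (b :: M) := cont_pos _ hbM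
    have hcM : 0 < cont M := cont_pos _ hM
    have ha : (1:ℚ) ≤ (a:ℚ) := by exact_mod_cast h a (by simp)
    have hx : (0:ℚ) < (cont (b :: M) : ℚ) := by exact_mod_cast hc1
    have hy : (0:ℚ) < (cont M : ℚ) := by exact_mod_cast hcM
    show 1 / ((a:ℚ) + contFrac (b :: M)) = (cont (b :: M) : ℚ) / (cont (a :: b :: M) : ℚ)
    have hcont : (cont (a :: b :: M) : ℚ) = a * cont (b :: M) + cont M := by
      simp only [cont]; push_cast; ring
    rw [ih, hcont]
    have htail : ((b :: M).tail : List ℕ) = M := rfl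
    rw [htail]
    rw [show (a:ℚ) + (cont M : ℚ) / (cont (b :: M) : ℚ)
        = ((a:ℚ) * (cont (b :: M) : ℚ) + (cont M : ℚ)) / (cont (b :: M) : ℚ) by
      field_simp, one_div_div]

lemma q_eq_cont (p q : ℕ) (L : List ℕ) (hp1 : 1 ≤ p) (hpq : p < q)
    (hg : Nat.gcd p q = 1) (hL : L ≠ []) (hent : ∀ x ∈ L, 1 ≤ x)
    (heq : contFrac L = (p : ℚ) / q) : q = cont L := by
  have hq0 : 0 < q := by omega
  have h1 : ((p : ℚ) / (q : ℚ)).den = q := by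
    have := Rat.den_div_eq_of_coprime (a := (p:ℤ)) (b := (q:ℤ))
      (by exact_mod_cast hq0) (by simpa [Int.natAbs_natCast] using hg)
    simpa using this
  have hcp : 0 < cont L := cont_pos L hent
  have h2 : ((cont L.tail : ℚ) / (cont L : ℚ)).den = cont L := by
    have := Rat.den_div_eq_of_coprime (a := (cont L.tail : ℤ)) (b := (cont L : ℤ))
      (by exact_mod_cast hcp) (by simpa [Int.natAbs_natCast] using cont_coprime L)
    simpa using this
  rw [contFrac_eq L hL hent] at heq
  rw [← h1, ← heq, h2]


end IndepAux

namespace IndepAux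

open Sum Set

def IndepP {V : Type*} (G : SimpleGraph V) (s : Set V) : Prop :=
  ∀ x ∈ s, ∀ y ∈ s, ¬ G.Adj x y

lemma numIndep_eq {V : Type*} (G : SimpleGraph V) :
    numIndep G = Nat.card {s : Set V // IndepP G s} := rfl

noncomputable def numAvoid {V : Type*} (G : SimpleGraph V) (P : Set V) : ℕ :=
  Nat.card {s : Set V // IndepP G s ∧ ∀ x ∈ P, x ∉ s}

/-- the step graph: a clique `Fin a`, vertex `0` of which is joined to `P`. -/
def stepGraph (a : ℕ) {V : Type*} (G : SimpleGraph V) (P : Set V) :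
    SimpleGraph (Fin a ⊕ V) where
  Adj x y :=
    Sum.elim (fun i => Sum.elim (fun j => i ≠ j) (fun v => i.val = 0 ∧ v ∈ P) y)
             (fun u => Sum.elim (fun j => j.val = 0 ∧ u ∈ P) (fun v => G.Adj u v) y) x
  symm := by
    constructor; rintro (i | u) (j | v) h <;> simp_all <;> tauto
  loopless := by
    constructor; rintro (i | u) h <;> simp_all

@[simp] lemma step_adj_inl_inl {a : ℕ} {V : Type*} {G : SimpleGraph V} {P : Set V}
    {i j : Fin a} : (stepGraph a G P).Adj (inl i) (inl j) ↔ i ≠ j := Iff.rfl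

@[simp] lemma step_adj_inl_inr {a : ℕ} {V : Type*} {G : SimpleGraph V} {P : Set V}
    {i : Fin a} {v : V} :
    (stepGraph a G P).Adj (inl i) (inr v) ↔ i.val = 0 ∧ v ∈ P := Iff.rfl

@[simp] lemma step_adj_inr_inl {a : ℕ} {V : Type*} {G : SimpleGraph V} {P : Set V}
    {i : Fin a} {v : V} :
    (stepGraph a G P).Adj (inr v) (inl i) ↔ i.val = 0 ∧ v ∈ P := Iff.rfl

@[simp] lemma step_adj_inr_inr {a : ℕ} {V : Type*} {G : SimpleGraph V} {P : Set V}
    {u v : V} : (stepGraph a G P).Adj (inr u) (inr v) ↔ G.Adj u v := Iff.rfl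


lemma numIndep_top (k : ℕ) : numIndep (⊤ : SimpleGraph (Fin k)) = k + 1 := by
  rw [numIndep_eq]
  have hb : Function.Bijective
      (fun o : Option (Fin k) =>
        (⟨Option.elim o (∅ : Set (Fin k)) (fun i => {i}), by
          rcases o with _ | i <;>
            simp [IndepP]⟩ :
          {s : Set (Fin k) // IndepP (⊤ : SimpleGraph (Fin k)) s})) := by
    constructor
    · rintro (_ | i) (_ | j) h
      · rfl
      · exfalso
        have : (∅ : Set (Fin k)) = {j} := congrArg Subtype.val h
        have := this.symm ▸ (Set.mem_singleton j)
        simp at this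
      · exfalso
        have : ({i} : Set (Fin k)) = ∅ := congrArg Subtype.val h
        have := this ▸ (Set.mem_singleton i)
        simp at this
      · have : ({i} : Set (Fin k)) = {j} := congrArg Subtype.val h
        simpa using this
    · rintro ⟨s, hs⟩
      rcases s.eq_empty_or_nonempty with rfl | ⟨x, hx⟩
      · exact ⟨none, by simp⟩
      · refine ⟨some x, ?_⟩
        have hsx : s = {x} := by
          ext y
          simp only [Set.mem_singleton_iff]
          constructor
          · intro hy
            by_contra hne
            exact hs y hy x hx (by simpa using hne)
          · rintro rfl; exact hx
        simp [hsx]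
  rw [← Nat.card_congr (Equiv.ofBijective _ hb)]
  simp

lemma numAvoid_top (k : ℕ) : numAvoid (⊤ : SimpleGraph (Fin k)) Set.univ = 1 := by
  rw [numAvoid]
  rw [Nat.card_eq_one_iff_unique]
  constructor
  · constructor
    rintro ⟨s, _, hs⟩ ⟨t, _, ht⟩
    have hs' : s = ∅ := by
      ext x; simp only [Set.mem_empty_iff_false, iff_false]
      exact hs x (Set.mem_univ x)
    have ht' : t = ∅ := by
      ext x; simp only [Set.mem_empty_iff_false, iff_false]
      exact ht x (Set.mem_univ x)
    simp [hs', ht']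
  · exact ⟨⟨∅, by simp [IndepP], by simp⟩⟩

end IndepAux
section StepCount
namespace IndepAux
open Sum Set

variable {V : Type*} (a : ℕ) (G : SimpleGraph V) (P : Set V)

def emb (u : Set V) : Set (Fin a ⊕ V) := Sum.inr '' u

@[simp] lemma mem_emb_inr {u : Set V} {v : V} : inr v ∈ emb a u ↔ v ∈ u := by
  simp [emb]

@[simp] lemma not_mem_emb_inl {u : Set V} {i : Fin a} : inl i ∉ emb a u := by
  simp [emb]

@[simp] lemma mem_insert_emb_inl {u : Set V} {i j : Fin a} :
    inl i ∈ insert (inl j) (emb a u) ↔ i = j := by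
  simp [Set.mem_insert_iff]

@[simp] lemma mem_insert_emb_inr {u : Set V} {j : Fin a} {v : V} :
    inr v ∈ insert (inl j) (emb a u) ↔ v ∈ u := by
  simp [Set.mem_insert_iff]

lemma emb_injective : Function.Injective (emb a (V := V)) :=
  Set.image_injective.mpr Sum.inr_injective

lemma emb_ne_insert {u u' : Set V} {j : Fin a} :
    emb a u ≠ insert (inl j) (emb a u') := by
  intro h
  have : (inl j : Fin a ⊕ V) ∈ emb a u := h.symm ▸ Set.mem_insert _ _
  simp at this

lemma insert_emb_inj {u u' : Set V} {j j' : Fin a}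
    (h : insert (inl j) (emb a u) = insert (inl j') (emb a u')) :
    j = j' ∧ u = u' := by
  have hj : (inl j : Fin a ⊕ V) ∈ insert (inl j') (emb a u') := h ▸ Set.mem_insert _ _
  rw [mem_insert_emb_inl] at hj
  refine ⟨hj, ?_⟩
  ext v
  have := congrArg (fun s => (inr v : Fin a ⊕ V) ∈ s) h
  simpa using this

variable {a G P}

lemma indep_emb {u : Set V} (h : IndepP G u) : IndepP (stepGraph a G P) (emb a u) := by
  rintro x hx y hy
  obtain ⟨v, hv, rfl⟩ := hx
  obtain ⟨w, hw, rfl⟩ := hy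
  simpa using h v hv w hw

lemma indep_insert {u : Set V} (i : Fin a) (h : IndepP G u)
    (hP : i.val = 0 → ∀ x ∈ P, x ∉ u) :
    IndepP (stepGraph a G P) (insert (inl i) (emb a u)) := by
  rintro x hx y hy
  rcases Set.mem_insert_iff.mp hx with rfl | hx'
  · rcases Set.mem_insert_iff.mp hy with rfl | hy'
    · simp
    · obtain ⟨w, hw, rfl⟩ := hy'
      rintro ⟨h0, hwP⟩
      exact hP h0 w hwP hw
  · obtain ⟨v, hv, rfl⟩ := hx'
    rcases Set.mem_insert_iff.mp hy with rfl | hy'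
    · rintro ⟨h0, hvP⟩
      exact hP h0 v hvP hv
    · obtain ⟨w, hw, rfl⟩ := hy'
      simpa using h v hv w hw

variable (a G P)

lemma numIndep_step [Finite V] (ha : 1 ≤ a) :
    numIndep (stepGraph a G P) = a * numIndep G + numAvoid G P := by
  classical
  let T := {s : Set V // IndepP G s}
  let TA := {s : Set V // IndepP G s ∧ ∀ x ∈ P, x ∉ s}
  let S := {s : Set (Fin a ⊕ V) // IndepP (stepGraph a G P) s}
  let Φ : T ⊕ TA ⊕ (Fin (a - 1) × T) → S := fun x =>
    match x with
    | Sum.inl ⟨u, hu⟩ => ⟨emb a u, indep_emb hu⟩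
    | Sum.inr (Sum.inl ⟨u, hu, hPu⟩) =>
        ⟨insert (inl ⟨0, ha⟩) (emb a u), indep_insert _ hu (fun _ => hPu)⟩
    | Sum.inr (Sum.inr (k, ⟨u, hu⟩)) =>
        ⟨insert (inl ⟨k.val + 1, by have := k.isLt; omega⟩) (emb a u),
          indep_insert _ hu (by simp)⟩
  have hb : Function.Bijective Φ := by
    constructor
    · rintro (⟨u, hu⟩ | (⟨u, hu, hPu⟩ | ⟨k, u, hu⟩)) (⟨u', hu'⟩ | (⟨u', hu', hPu'⟩ | ⟨k', u', hu'⟩)) h <;>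
        replace h := congrArg Subtype.val h
      · have := emb_injective a (V := V) h
        cases this; rfl
      · exact absurd h (emb_ne_insert a)
      · exact absurd h (emb_ne_insert a)
      · exact absurd h.symm (emb_ne_insert a)
      · obtain ⟨-, hu''⟩ := insert_emb_inj a h
        cases hu''; rfl
      · obtain ⟨hj, -⟩ := insert_emb_inj a h
        have := congrArg Fin.val hj
        simp at this
      · exact absurd h.symm (emb_ne_insert a)
      · obtain ⟨hj, -⟩ := insert_emb_inj a h
        have := congrArg Fin.val hj
        simp at this
      · obtain ⟨hj, hu''⟩ := insert_emb_inj a h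
        have hk : k = k' := by
          have := congrArg Fin.val hj
          simp at this
          exact Fin.ext this
        cases hk; cases hu''; rfl
    · rintro ⟨s, hs⟩
      let u : Set V := {v | inr v ∈ s}
      have hu : IndepP G u := by
        intro x hx y hy hadj
        exact hs (inr x) hx (inr y) hy (by simpa using hadj)
      by_cases hex : ∃ i : Fin a, inl i ∈ s
      · obtain ⟨i, hi⟩ := hex
        have hsi : ∀ j : Fin a, inl j ∈ s ↔ j = i := by
          intro j
          constructor
          · intro hj
            by_contra hne
            exact hs (inl j) hj (inl i) hi (by simpa using hne)
          · rintro rfl; exact hi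
        by_cases hi0 : i.val = 0
        · refine ⟨Sum.inr (Sum.inl ⟨u, hu, ?_⟩), ?_⟩
          · intro x hxP hxu
            exact hs (inl i) hi (inr x) hxu (by simp [hi0, hxP])
          · apply Subtype.ext
            show insert (inl ⟨0, ha⟩) (emb a u) = s
            have hi' : i = ⟨0, ha⟩ := Fin.ext hi0
            ext (j | v)
            · rw [mem_insert_emb_inl, hsi j, hi']
            · simp [u]
        · refine ⟨Sum.inr (Sum.inr (⟨⟨i.val - 1, by have := i.isLt; omega⟩, ⟨u, hu⟩⟩)), ?_⟩
          apply Subtype.ext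
          show insert (inl ⟨i.val - 1 + 1, _⟩) (emb a u) = s
          have hi' : (⟨i.val - 1 + 1, by have := i.isLt; omega⟩ : Fin a) = i := by
            apply Fin.ext; simp; omega
          ext (j | v)
          · rw [mem_insert_emb_inl, hsi j, hi']
          · simp [u]
      · refine ⟨Sum.inl ⟨u, hu⟩, ?_⟩
        apply Subtype.ext
        show emb a u = s
        push_neg at hex
        ext (j | v)
        · simp [hex j]
        · simp [u]
  have hcard : Nat.card S = Nat.card T + (Nat.card TA + (a - 1) * Nat.card T) := by
    rw [← Nat.card_congr (Equiv.ofBijective _ hb), Nat.card_sum, Nat.card_sum, Nat.card_prod]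
    simp
  rw [numIndep_eq, numIndep_eq, numAvoid]
  show Nat.card S = a * Nat.card T + Nat.card TA
  rw [hcard]
  have h1 : a - 1 + 1 = a := by omega
  calc Nat.card T + (Nat.card TA + (a - 1) * Nat.card T)
      = (a - 1 + 1) * Nat.card T + Nat.card TA := by ring
    _ = a * Nat.card T + Nat.card TA := by rw [h1]

lemma numAvoid_step [Finite V] :
    numAvoid (stepGraph a G P) (Set.range (inl : Fin a → Fin a ⊕ V)) = numIndep G := by
  classical
  let T := {s : Set V // IndepP G s}
  let SA := {s : Set (Fin a ⊕ V) // IndepP (stepGraph a G P) s ∧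
      ∀ x ∈ Set.range (inl : Fin a → Fin a ⊕ V), x ∉ s}
  let Φ : T → SA := fun x => ⟨emb a x.val, indep_emb x.prop, by rintro _ ⟨i, rfl⟩; simp⟩
  have hb : Function.Bijective Φ := by
    constructor
    · rintro ⟨u, hu⟩ ⟨u', hu'⟩ h
      replace h := congrArg Subtype.val h
      have := emb_injective a (V := V) h
      cases this; rfl
    · rintro ⟨s, hs, hav⟩
      refine ⟨⟨{v | inr v ∈ s}, fun x hx y hy hadj =>
        hs (inr x) hx (inr y) hy (by simpa using hadj)⟩, ?_⟩
      apply Subtype.ext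
      show emb a {v | inr v ∈ s} = s
      ext (j | v)
      · simp only [not_mem_emb_inl, false_iff]
        exact hav (inl j) ⟨j, rfl⟩
      · simp
  rw [numAvoid, numIndep_eq]
  exact (Nat.card_congr (Equiv.ofBijective _ hb)).symm

end IndepAux
end StepCount
namespace IndepAux
open Sum Set

structure GG where
  V : Type
  fin : Fintype V
  G : SimpleGraph V
  P : Set V

attribute [instance] GG.fin

def GG.base (k : ℕ) : GG := ⟨Fin k, inferInstance, ⊤, Set.univ⟩

def GG.step (a : ℕ) (H : GG) : GG :=
  ⟨Fin a ⊕ H.V, inferInstance, stepGraph a H.G H.P, Set.range Sum.inl⟩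

def build : List ℕ → GG
  | [] => GG.base 0
  | [a] => GG.base (a - 1)
  | a :: b :: M => GG.step a (build (b :: M))

noncomputable def GG.nI (H : GG) : ℕ := numIndep H.G
noncomputable def GG.nA (H : GG) : ℕ := numAvoid H.G H.P

lemma build_count : ∀ L : List ℕ, (∀ x ∈ L, 1 ≤ x) →
    (build L).nI = cont L ∧ (build L).nA = cont L.tail
  | [], _ => by
    constructor
    · show numIndep (⊤ : SimpleGraph (Fin 0)) = 1
      simpa using numIndep_top 0
    · show numAvoid (⊤ : SimpleGraph (Fin 0)) Set.univ = 1
      exact numAvoid_top 0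
  | [a], h => by
    have ha := h a (by simp)
    constructor
    · show numIndep (⊤ : SimpleGraph (Fin (a - 1))) = cont [a]
      rw [numIndep_top]
      show a - 1 + 1 = a
      omega
    · exact numAvoid_top _
  | a :: b :: M, h => by
    have hbM : ∀ x ∈ b :: M, 1 ≤ x := fun x hx => h x (by simp at hx ⊢; tauto)
    obtain ⟨ih1, ih2⟩ := build_count (b :: M) hbM
    have ha : 1 ≤ a := h a (by simp)
    constructor
    · show numIndep (stepGraph a (build (b :: M)).G (build (b :: M)).P) = cont (a :: b :: M)
      rw [numIndep_step _ _ _ ha]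
      show a * (build (b :: M)).nI + (build (b :: M)).nA = cont (a :: b :: M)
      rw [ih1, ih2]
      rfl
    · show numAvoid (stepGraph a (build (b :: M)).G (build (b :: M)).P)
        (Set.range Sum.inl) = cont (b :: M)
      rw [numAvoid_step]
      exact ih1

lemma build_good : ∀ L : List ℕ, (∀ x ∈ L, 1 ≤ x) →
    (build L).G.Preconnected ∧ (Nonempty (build L).V → (build L).P.Nonempty)
  | [], _ => by
    constructor
    · intro u v; exact absurd u.2 (by omega)
    · rintro ⟨u⟩; exact absurd u.2 (by omega)
  | [a], h => by
    constructor
    · intro u v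
      by_cases huv : u = v
      · exact huv ▸ SimpleGraph.Reachable.refl u
      · exact SimpleGraph.Adj.reachable (show (⊤ : SimpleGraph (Fin (a - 1))).Adj u v from (SimpleGraph.top_adj _ _).mpr huv)
    · rintro ⟨u⟩; exact ⟨u, Set.mem_univ u⟩
  | a :: b :: M, h => by
    have hbM : ∀ x ∈ b :: M, 1 ≤ x := fun x hx => h x (by simp at hx ⊢; tauto)
    obtain ⟨ihpre, ihP⟩ := build_good (b :: M) hbM
    have ha : 1 ≤ a := h a (by simp)
    set H := build (b :: M) with hH
    let z : Fin a := ⟨0, ha⟩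
    let hom : H.G →g stepGraph a H.G H.P :=
      ⟨Sum.inr, fun {x y} hxy => by simpa using hxy⟩
    have reach_all : ∀ x : Fin a ⊕ H.V,
        (stepGraph a H.G H.P).Reachable x (Sum.inl z) := by
      rintro (i | v)
      · by_cases hiz : i = z
        · exact hiz ▸ SimpleGraph.Reachable.refl _
        · exact SimpleGraph.Adj.reachable (by simpa using hiz)
      · obtain ⟨p, hp⟩ := ihP ⟨v⟩
        have h1 : (stepGraph a H.G H.P).Reachable (Sum.inr v) (Sum.inr p) :=
          (ihpre v p).map hom
        exact h1.trans (SimpleGraph.Adj.reachable (by simp [z, hp]))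
    constructor
    · intro x y
      exact (reach_all x).trans (reach_all y).symm
    · intro _
      exact ⟨Sum.inl z, Set.mem_range_self z⟩

lemma numIndep_of_isEmpty {W : Type*} (G : SimpleGraph W) (h : IsEmpty W) :
    numIndep G = 1 := by
  rw [numIndep_eq, Nat.card_eq_one_iff_unique]
  have hss : Subsingleton (Set W) :=
    ⟨fun s t => by ext x; exact (h.false x).elim⟩
  constructor
  · exact ⟨fun s t => Subtype.ext (hss.allEq s.1 t.1)⟩
  · exact ⟨⟨∅, fun x hx => (hx.elim : _)⟩⟩

end IndepAux
namespace IndepAux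
open Sum Set

lemma two_mul_choose_two : ∀ k : ℕ, 2 * k.choose 2 = k * (k - 1)
  | 0 => by simp
  | 1 => by simp
  | (m + 2) => by
    have ih := two_mul_choose_two (m + 1)
    have h1 : (m + 2).choose 2 = (m + 1).choose 1 + (m + 1).choose 2 :=
      Nat.choose_succ_succ' (m + 1) 1
    rw [h1, Nat.mul_add, ih, Nat.choose_one_right]
    have e1 : m + 1 - 1 = m := by omega
    have e2 : m + 2 - 1 = m + 1 := by omega
    rw [e1, e2]
    ring

lemma tri_bound (A k : ℕ) (hk : k ≤ A) : k * (k - 1) + 2 * k ≤ (A + 1) * k := by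
  rcases k with _ | t
  · simp
  · simp only [Nat.add_sub_cancel]
    have heq : (t + 1) * t + 2 * (t + 1) = (t + 1) * (t + 2) := by ring
    rw [heq, mul_comm (A + 1) (t + 1)]
    exact Nat.mul_le_mul_left _ (by omega)

lemma card_edgeSet_top (k : ℕ) : Nat.card (⊤ : SimpleGraph (Fin k)).edgeSet = k.choose 2 := by
  classical
  rw [Nat.card_eq_fintype_card, ← SimpleGraph.edgeFinset_card]
  rw [SimpleGraph.card_edgeFinset_top_eq_card_choose_two]
  simp

lemma card_edgeSet_step_le {V : Type*} [Fintype V] (a : ℕ) (ha : 1 ≤ a)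
    (G : SimpleGraph V) (P : Set V) :
    Nat.card (stepGraph a G P).edgeSet ≤
      a.choose 2 + Nat.card P + Nat.card G.edgeSet := by
  classical
  set z : Fin a := ⟨0, ha⟩ with hz
  set S1 : Set (Sym2 (Fin a ⊕ V)) := Sym2.map inl '' (⊤ : SimpleGraph (Fin a)).edgeSet
  set S2 : Set (Sym2 (Fin a ⊕ V)) := (fun v => s(Sum.inl z, Sum.inr v)) '' P
  set S3 : Set (Sym2 (Fin a ⊕ V)) := Sym2.map inr '' G.edgeSet
  have hsub : (stepGraph a G P).edgeSet ⊆ S1 ∪ S2 ∪ S3 := by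
    intro e he
    induction e using Sym2.ind with
    | _ x y =>
      rw [SimpleGraph.mem_edgeSet] at he
      rcases x with i | u <;> rcases y with j | v
      · left; left
        exact ⟨s(i, j), by simpa using he, by simp⟩
      · obtain ⟨h0, hv⟩ := he
        left; right
        refine ⟨v, hv, ?_⟩
        have hiz : i = z := Fin.ext h0
        rw [hiz]
      · obtain ⟨h0, hu⟩ := he
        left; right
        refine ⟨u, hu, ?_⟩
        have hjz : j = z := Fin.ext h0
        rw [hjz, Sym2.eq_swap]
      · right
        exact ⟨s(u, v), by simpa using he, by simp⟩
  have h1 : S1.ncard ≤ a.choose 2 := by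
    calc S1.ncard ≤ ((⊤ : SimpleGraph (Fin a)).edgeSet).ncard :=
          Set.ncard_image_le (Set.toFinite _)
      _ = Nat.card (⊤ : SimpleGraph (Fin a)).edgeSet := (Nat.card_coe_set_eq _).symm
      _ = a.choose 2 := card_edgeSet_top a
  have h2 : S2.ncard ≤ Nat.card P := by
    calc S2.ncard ≤ P.ncard := Set.ncard_image_le (Set.toFinite _)
      _ = Nat.card P := (Nat.card_coe_set_eq _).symm
  have h3 : S3.ncard ≤ Nat.card G.edgeSet := by
    calc S3.ncard ≤ (G.edgeSet).ncard := Set.ncard_image_le (Set.toFinite _)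
      _ = Nat.card G.edgeSet := (Nat.card_coe_set_eq _).symm
  calc Nat.card (stepGraph a G P).edgeSet
      = ((stepGraph a G P).edgeSet).ncard := Nat.card_coe_set_eq _
    _ ≤ (S1 ∪ S2 ∪ S3).ncard := Set.ncard_le_ncard hsub (Set.toFinite _)
    _ ≤ (S1 ∪ S2).ncard + S3.ncard := Set.ncard_union_le _ _
    _ ≤ S1.ncard + S2.ncard + S3.ncard := by
        have := Set.ncard_union_le S1 S2
        omega
    _ ≤ a.choose 2 + Nat.card P + Nat.card G.edgeSet := by omega

lemma build_edge (A : ℕ) : ∀ L : List ℕ, (∀ x ∈ L, 1 ≤ x ∧ x ≤ A) →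
    2 * Nat.card (build L).G.edgeSet + 2 * Nat.card (build L).P ≤
      (A + 1) * Nat.card (build L).V
  | [], _ => by
    show 2 * Nat.card (⊤ : SimpleGraph (Fin 0)).edgeSet +
      2 * Nat.card (Set.univ : Set (Fin 0)) ≤ (A + 1) * Nat.card (Fin 0)
    rw [card_edgeSet_top]
    simp
  | [a], h => by
    obtain ⟨ha1, haA⟩ := h a (by simp)
    show 2 * Nat.card (⊤ : SimpleGraph (Fin (a - 1))).edgeSet +
      2 * Nat.card (Set.univ : Set (Fin (a - 1))) ≤ (A + 1) * Nat.card (Fin (a - 1))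
    rw [card_edgeSet_top]
    have hu : Nat.card (Set.univ : Set (Fin (a - 1))) = a - 1 := by
      rw [Nat.card_coe_set_eq, Set.ncard_univ]
      simp
    rw [hu, two_mul_choose_two]
    simp only [Nat.card_eq_fintype_card, Fintype.card_fin]
    exact tri_bound A (a - 1) (by omega)
  | a :: b :: M, h => by
    have hbM : ∀ x ∈ b :: M, 1 ≤ x ∧ x ≤ A := fun x hx => h x (by simp at hx ⊢; tauto)
    have ih := build_edge A (b :: M) hbM
    obtain ⟨ha1, haA⟩ := h a (by simp)
    set H := build (b :: M) with hH
    show 2 * Nat.card (stepGraph a H.G H.P).edgeSet +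
      2 * Nat.card (Set.range (Sum.inl : Fin a → Fin a ⊕ H.V)) ≤
      (A + 1) * Nat.card (Fin a ⊕ H.V)
    have hport : Nat.card (Set.range (Sum.inl : Fin a → Fin a ⊕ H.V)) = a := by
      rw [Nat.card_range_of_injective Sum.inl_injective]
      simp
    have hV : Nat.card (Fin a ⊕ H.V) = a + Nat.card H.V := by
      rw [Nat.card_sum]
      simp
    have hedge := card_edgeSet_step_le a ha1 H.G H.P
    rw [hport, hV]
    have h2c := two_mul_choose_two a
    have haa : a * (a - 1) + 2 * a ≤ (A + 1) * a := tri_bound A a haA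
    have expand : (A + 1) * (a + Nat.card H.V) = (A + 1) * a + (A + 1) * Nat.card H.V := by
      ring
    omega

end IndepAux

namespace IndepAux
open Sum Set

lemma indepP_image_iso {V W : Type*} {G : SimpleGraph V} {G' : SimpleGraph W}
    (φ : G ≃g G') (s : Set V) : IndepP G' (φ.toEquiv '' s) ↔ IndepP G s := by
  constructor
  · intro h x hx y hy hadj
    exact h (φ.toEquiv x) ⟨x, hx, rfl⟩ (φ.toEquiv y) ⟨y, hy, rfl⟩
      (φ.map_adj_iff.mpr hadj)
  · rintro h x ⟨x0, hx0, rfl⟩ y ⟨y0, hy0, rfl⟩ hadj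
    exact h x0 hx0 y0 hy0 (φ.map_adj_iff.mp hadj)

lemma numIndep_iso {V W : Type*} (G : SimpleGraph V) (G' : SimpleGraph W)
    (φ : G ≃g G') : numIndep G' = numIndep G := by
  rw [numIndep_eq, numIndep_eq]
  apply Nat.card_congr
  exact
    { toFun := fun x => ⟨φ.symm.toEquiv '' x.1, (indepP_image_iso φ.symm x.1).mpr x.2⟩
      invFun := fun y => ⟨φ.toEquiv '' y.1, (indepP_image_iso φ y.1).mpr y.2⟩
      left_inv := by
        rintro ⟨s, hs⟩
        apply Subtype.ext
        show φ.toEquiv '' (φ.symm.toEquiv '' s) = s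
        rw [← Set.image_comp]
        simp
      right_inv := by
        rintro ⟨s, hs⟩
        apply Subtype.ext
        show φ.symm.toEquiv '' (φ.toEquiv '' s) = s
        rw [← Set.image_comp]
        simp }

lemma exists_fin_graph (H : GG) (hconn : H.G.Connected) :
    ∃ (n : ℕ) (G' : SimpleGraph (Fin n)), G'.Connected ∧ numIndep G' = numIndep H.G ∧
      Nat.card G'.edgeSet = Nat.card H.G.edgeSet ∧ n = Nat.card H.V := by
  classical
  let n := Fintype.card H.V
  let e := Fintype.equivFin H.V
  let G' : SimpleGraph (Fin n) := SimpleGraph.comap (⇑e.symm) H.G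
  have hmap : ∀ a b, G'.Adj (e a) (e b) ↔ H.G.Adj a b := by
    intro a b
    show H.G.Adj (e.symm (e a)) (e.symm (e b)) ↔ H.G.Adj a b
    rw [Equiv.symm_apply_apply, Equiv.symm_apply_apply]
  let φ : H.G ≃g G' := ⟨e, by intro a b; exact hmap a b⟩
  rw [SimpleGraph.connected_iff] at hconn
  obtain ⟨hpre, hne⟩ := hconn
  refine ⟨n, G', ?_, ?_, ?_, ?_⟩
  · rw [SimpleGraph.connected_iff]
    refine ⟨?_, ?_⟩
    · intro i j
      have h1 := (hpre (e.symm i) (e.symm j)).map φ.toHom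
      have h2 : φ.toHom (e.symm i) = i := by
        show e (e.symm i) = i
        simp
      have h3 : φ.toHom (e.symm j) = j := by
        show e (e.symm j) = j
        simp
      rwa [h2, h3] at h1
    · exact Nonempty.map e hne
  · exact numIndep_iso H.G G' φ
  · exact (Nat.card_congr φ.mapEdgeSet).symm
  · simp [n, Nat.card_eq_fintype_card]

end IndepAux

theorem exists_connected_graph_of_mem_QSet (A : ℕ) (hA : 0 < A) (q : ℕ)
    (hq : 2 ≤ q) (hQ : q ∈ QSet A) :
    ∃ (n : ℕ) (G : SimpleGraph (Fin n)), G.Connected ∧ numIndep G = q ∧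
      2 * Nat.card G.edgeSet ≤ (A + 1) * n := by
  rcases hQ with h1 | ⟨p, hp1, hpq, hg, L, hL, hent, heq⟩
  · omega
  have hent1 : ∀ x ∈ L, 1 ≤ x := fun x hx => (hent x hx).1
  have hqc : q = IndepAux.cont L := IndepAux.q_eq_cont p q L hp1 hpq hg hL hent1 heq
  obtain ⟨hnI, -⟩ := IndepAux.build_count L hent1
  have hnum : numIndep (IndepAux.build L).G = q := by
    rw [hqc]; exact hnI
  have hne : Nonempty (IndepAux.build L).V := by
    by_contra hh
    rw [not_nonempty_iff] at hh
    have := IndepAux.numIndep_of_isEmpty (IndepAux.build L).G hh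
    omega
  obtain ⟨hpre, -⟩ := IndepAux.build_good L hent1
  have hconn : (IndepAux.build L).G.Connected := by
    rw [SimpleGraph.connected_iff]
    exact ⟨hpre, hne⟩
  have hedge := IndepAux.build_edge A L hent
  obtain ⟨n, G', hc, hni, hes, hn⟩ := IndepAux.exists_fin_graph (IndepAux.build L) hconn
  refine ⟨n, G', hc, by rw [hni, hnum], ?_⟩
  rw [hes, hn]
  omega
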